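/- Let p, q be unimodular complex sequences of length L. Then for every real number t, |Σ_{i=0}^{L-1} p_i · exp(2π√−1·i·t)|² ≤ 2L + 2·Σ_{τ=1}^{L-1} |ρ_p(τ) + ρ_q(τ)|. Consequently, PMEPR(p) ≤ 2 + (2/L)·Σ_{τ=1}^{L-1} |ρ_p(τ) + ρ_q(τ)|. -/

import Mathlib

open Finset

noncomputable section

/-- 1D aperiodic autocorrelation of a length-`N` complex sequence at integer shift `τ`:
`ρ_x(τ) = Σ x_j * conj (x_{j+τ})`, summed over all `j` with `j` and `j + τ` in `[0, N)`. -/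
def acorr (N : ℕ) (x : ℕ → ℂ) (τ : ℤ) : ℂ :=
  ∑ j ∈ Finset.range N,
    if 0 ≤ (j : ℤ) + τ ∧ (j : ℤ) + τ < (N : ℤ) then
      x j * star (x ((j : ℤ) + τ).toNat)
    else 0

/-- 2D aperiodic autocorrelation of an `N₁ × N₂` complex array at integer shifts `(τ₁, τ₂)`. -/
def acorr2 (N₁ N₂ : ℕ) (X : ℕ → ℕ → ℂ) (τ₁ τ₂ : ℤ) : ℂ :=
  ∑ i ∈ Finset.range N₁, ∑ j ∈ Finset.range N₂,
    if (0 ≤ (i : ℤ) + τ₁ ∧ (i : ℤ) + τ₁ < (N₁ : ℤ)) ∧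
       (0 ≤ (j : ℤ) + τ₂ ∧ (j : ℤ) + τ₂ < (N₂ : ℤ)) then
      X i j * star (X ((i : ℤ) + τ₁).toNat ((j : ℤ) + τ₂).toNat)
    else 0

/-- Peak-to-mean envelope power ratio of a length-`L` complex sequence:
`sup_{t ∈ [0,1]} (1/L) * |Σ_{i<L} c_i exp(2π√-1 i t)|²`. -/
def pmepr (L : ℕ) (c : ℕ → ℂ) : ℝ :=
  ⨆ t : Set.Icc (0 : ℝ) 1,
    ‖∑ i ∈ Finset.range L,
      c i * Complex.exp (2 * Real.pi * Complex.I * (i : ℂ) * ((t : ℝ) : ℂ))‖ ^ 2 / L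

lemma acorr_nat (L : ℕ) (x : ℕ → ℂ) (τ : ℕ) :
    acorr L x (τ : ℤ) = ∑ j ∈ Finset.range L,
      if j + τ < L then x j * star (x (j + τ)) else 0 := by
  unfold acorr
  refine Finset.sum_congr rfl fun j hj => ?_
  have h1 : ((j : ℤ) + (τ : ℤ)).toNat = j + τ := by omega
  have h2 : (0 ≤ (j : ℤ) + τ ∧ (j : ℤ) + τ < (L : ℤ)) ↔ j + τ < L := by omega
  rw [h1]
  simp only [h2]

lemma key (L : ℕ) (x : ℕ → ℂ) (hx : ∀ i < L, ‖x i‖ = 1) (t : ℝ) :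
    ‖∑ i ∈ Finset.range L,
        x i * Complex.exp (2 * Real.pi * Complex.I * (i : ℂ) * (t : ℂ))‖ ^ 2
      = L + 2 * (∑ τ ∈ Finset.Icc 1 (L - 1),
          acorr L x (τ : ℤ) *
            (star (Complex.exp (2 * Real.pi * Complex.I * (t : ℂ)))) ^ τ).re := by
  set z := Complex.exp (2 * Real.pi * Complex.I * (t : ℂ)) with hz
  have hzabs : ‖z‖ = 1 := by
    rw [hz]
    have h : (2 * (Real.pi : ℂ) * Complex.I * (t : ℂ))
        = ((2 * Real.pi * t : ℝ) : ℂ) * Complex.I := by push_cast; ring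
    rw [h, Complex.norm_exp_ofReal_mul_I]
  have hzw : z * star z = 1 := by
    rw [Complex.star_def, Complex.mul_conj, ← Complex.sq_norm, hzabs]
    norm_num
  set a : ℕ → ℂ := fun i => x i * z ^ i with ha
  have haabs : ∀ i < L, a i * star (a i) = 1 := by
    intro i hi
    rw [Complex.star_def, Complex.mul_conj, ← Complex.sq_norm]
    have : ‖a i‖ = 1 := by
      rw [ha]
      simp only [norm_mul, norm_pow, hzabs, hx i hi]
      norm_num
    rw [this]
    norm_num
  have hsum : ∑ i ∈ Finset.range L,
      x i * Complex.exp (2 * Real.pi * Complex.I * (i : ℂ) * (t : ℂ))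
      = ∑ i ∈ Finset.range L, a i := by
    refine Finset.sum_congr rfl fun i _ => ?_
    have h : (2 * (Real.pi : ℂ) * Complex.I * (i : ℂ) * (t : ℂ))
        = (i : ℕ) * (2 * Real.pi * Complex.I * (t : ℂ)) := by push_cast; ring
    rw [ha, h, Complex.exp_nat_mul, hz]
  rw [hsum]
  set S := ∑ i ∈ Finset.range L, a i with hS
  have habs2 : ‖S‖ ^ 2 = (S * star S).re := by
    rw [Complex.star_def, Complex.mul_conj, ← Complex.sq_norm, Complex.ofReal_re]
  have hexp : S * star S = ∑ j ∈ Finset.range L, ∑ k ∈ Finset.range L,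
      a j * star (a k) := by
    rw [hS, star_sum, Finset.sum_mul_sum]
  have hsplit : ∀ j k : ℕ, a j * star (a k) =
      (if j = k then a j * star (a k) else 0) +
      (if j < k then a j * star (a k) else 0) +
      (if k < j then a j * star (a k) else 0) := by
    intro j k
    by_cases h1 : j = k
    · have h2 : ¬ j < k := by omega
      have h3 : ¬ k < j := by omega
      simp [h1, h2, h3]
    · rcases Nat.lt_or_ge j k with h2 | h2
      · have h3 : ¬ k < j := by omega
        simp [h1, h2, h3]
      · have h3 : k < j := by omega
        have h4 : ¬ j < k := by omega
        simp [h1, h3, h4]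
  set F := ∑ j ∈ Finset.range L, ∑ k ∈ Finset.range L,
      (if j < k then a j * star (a k) else 0) with hF
  have hdiag : (∑ j ∈ Finset.range L, ∑ k ∈ Finset.range L,
      (if j = k then a j * star (a k) else 0)) = (L : ℂ) := by
    have h : ∀ j ∈ Finset.range L,
        (∑ k ∈ Finset.range L, if j = k then a j * star (a k) else 0) = 1 := by
      intro j hj
      rw [Finset.sum_ite_eq]
      simp only [hj, if_true]
      exact haabs j (Finset.mem_range.mp hj)
    rw [Finset.sum_congr rfl h]
    simp
  have hG : (∑ j ∈ Finset.range L, ∑ k ∈ Finset.range L,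
      (if k < j then a j * star (a k) else 0)) = star F := by
    rw [hF, star_sum]
    simp_rw [star_sum, apply_ite (star : ℂ → ℂ), star_zero, star_mul, star_star]
    rw [Finset.sum_comm]
  have hprod : S * star S = (L : ℂ) + F + star F := by
    rw [hexp]
    calc ∑ j ∈ Finset.range L, ∑ k ∈ Finset.range L, a j * star (a k)
        = ∑ j ∈ Finset.range L, ∑ k ∈ Finset.range L,
            ((if j = k then a j * star (a k) else 0) +
             (if j < k then a j * star (a k) else 0) +
             (if k < j then a j * star (a k) else 0)) := by
          refine Finset.sum_congr rfl fun j _ => Finset.sum_congr rfl fun k _ => hsplit j k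
      _ = (L : ℂ) + F + star F := by
          simp_rw [Finset.sum_add_distrib]
          rw [hdiag, hG]
  have hFT : (∑ τ ∈ Finset.Icc 1 (L - 1), acorr L x (τ : ℤ) * (star z) ^ τ) = F := by
    have lhs_eq : (∑ τ ∈ Finset.Icc 1 (L - 1), acorr L x (τ : ℤ) * (star z) ^ τ)
        = ∑ p ∈ ((Finset.Icc 1 (L - 1)) ×ˢ Finset.range L).filter
            (fun p => p.2 + p.1 < L),
            x p.2 * star (x (p.2 + p.1)) * (star z) ^ p.1 := by
      rw [Finset.sum_filter, Finset.sum_product]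
      refine Finset.sum_congr rfl fun τ hτ => ?_
      rw [acorr_nat, Finset.sum_mul]
      refine Finset.sum_congr rfl fun j hj => ?_
      simp only [ite_mul, zero_mul]
    have rhs_eq : F = ∑ p ∈ ((Finset.range L) ×ˢ Finset.range L).filter
        (fun p => p.1 < p.2), a p.1 * star (a p.2) := by
      rw [Finset.sum_filter, Finset.sum_product, hF]
    rw [lhs_eq, rhs_eq]
    refine Finset.sum_nbij' (fun p => (p.2, p.2 + p.1)) (fun p => (p.2 - p.1, p.1))
      ?_ ?_ ?_ ?_ ?_
    · intro r hr
      simp only [Finset.mem_filter, Finset.mem_product, Finset.mem_Icc,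
        Finset.mem_range] at hr ⊢
      omega
    · intro r hr
      simp only [Finset.mem_filter, Finset.mem_product, Finset.mem_Icc,
        Finset.mem_range] at hr ⊢
      omega
    · intro r hr
      simp only [Finset.mem_filter, Finset.mem_product, Finset.mem_Icc,
        Finset.mem_range] at hr
      obtain ⟨τ, j⟩ := r
      dsimp only
      simp only [Prod.mk.injEq, and_true, true_and]
      omega
    · intro r hr
      simp only [Finset.mem_filter, Finset.mem_product, Finset.mem_Icc,
        Finset.mem_range] at hr
      obtain ⟨j, k⟩ := r
      dsimp only
      simp only [Prod.mk.injEq, and_true, true_and]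
      omega
    · intro r hr
      obtain ⟨τ, j⟩ := r
      show x j * star (x (j + τ)) * (star z) ^ τ = a j * star (a (j + τ))
      have hpow : z ^ j * (star z) ^ (j + τ) = (star z) ^ τ := by
        rw [pow_add, ← mul_assoc, ← mul_pow, hzw, one_pow, one_mul]
      simp only [ha, star_mul, star_pow]
      rw [← hpow]
      ring
  rw [habs2, hprod, hFT]
  simp only [Complex.add_re, Complex.natCast_re, Complex.star_def, Complex.conj_re]
  ring

/-- for unimodular sequences `p, q` of length `L`, the instantaneous
envelope power of `p` is bounded by `2L + 2 Σ_{τ=1}^{L-1} |ρ_p(τ) + ρ_q(τ)|`, and hence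
`PMEPR(p) ≤ 2 + (2/L) Σ_{τ=1}^{L-1} |ρ_p(τ) + ρ_q(τ)|`. -/
theorem stmt_7 (L : ℕ) (p q : ℕ → ℂ)
    (hp : ∀ i < L, ‖p i‖ = 1) (hq : ∀ i < L, ‖q i‖ = 1) :
    (∀ t : ℝ,
      ‖∑ i ∈ Finset.range L,
          p i * Complex.exp (2 * Real.pi * Complex.I * (i : ℂ) * (t : ℂ))‖ ^ 2 ≤
        2 * L + 2 * ∑ τ ∈ Finset.Icc 1 (L - 1),
          ‖acorr L p (τ : ℤ) + acorr L q (τ : ℤ)‖) ∧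
    pmepr L p ≤ 2 + (2 / L) * ∑ τ ∈ Finset.Icc 1 (L - 1),
      ‖acorr L p (τ : ℤ) + acorr L q (τ : ℤ)‖ := by
  have main : ∀ t : ℝ,
      ‖∑ i ∈ Finset.range L,
          p i * Complex.exp (2 * Real.pi * Complex.I * (i : ℂ) * (t : ℂ))‖ ^ 2 ≤
        2 * L + 2 * ∑ τ ∈ Finset.Icc 1 (L - 1),
          ‖acorr L p (τ : ℤ) + acorr L q (τ : ℤ)‖ := by
    intro t
    have hkp := key L p hp t
    have hkq := key L q hq t
    set z := Complex.exp (2 * Real.pi * Complex.I * (t : ℂ)) with hz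
    have hzabs : ‖z‖ = 1 := by
      rw [hz]
      have h : (2 * (Real.pi : ℂ) * Complex.I * (t : ℂ))
          = ((2 * Real.pi * t : ℝ) : ℂ) * Complex.I := by push_cast; ring
      rw [h, Complex.norm_exp_ofReal_mul_I]
    have hbound : (∑ τ ∈ Finset.Icc 1 (L - 1), acorr L p (τ : ℤ) * (star z) ^ τ).re
        + (∑ τ ∈ Finset.Icc 1 (L - 1), acorr L q (τ : ℤ) * (star z) ^ τ).re
        ≤ ∑ τ ∈ Finset.Icc 1 (L - 1),
            ‖acorr L p (τ : ℤ) + acorr L q (τ : ℤ)‖ := by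
      rw [← Complex.add_re, ← Finset.sum_add_distrib]
      refine le_trans (Complex.re_le_norm _) ?_
      refine le_trans (norm_sum_le _ _) ?_
      refine Finset.sum_le_sum fun τ hτ => ?_
      rw [← add_mul, norm_mul, norm_pow]
      have h1 : ‖star z‖ = 1 := by
        rw [Complex.star_def, Complex.norm_conj, hzabs]
      rw [h1, one_pow, mul_one]
    have hqnn : 0 ≤ ‖∑ i ∈ Finset.range L,
        q i * Complex.exp (2 * Real.pi * Complex.I * (i : ℂ) * (t : ℂ))‖ ^ 2 :=
      sq_nonneg _
    nlinarith [hkp, hkq, hbound, hqnn]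
  refine ⟨main, ?_⟩
  unfold pmepr
  have hnn : 0 ≤ ∑ τ ∈ Finset.Icc 1 (L - 1),
      ‖acorr L p (τ : ℤ) + acorr L q (τ : ℤ)‖ :=
    Finset.sum_nonneg fun τ _ => norm_nonneg _
  refine ciSup_le fun t => ?_
  rcases Nat.eq_zero_or_pos L with hL | hL
  · subst hL
    simp only [Nat.cast_zero, div_zero]
    positivity
  · have hLpos : (0 : ℝ) < L := by exact_mod_cast hL
    rw [div_le_iff₀ hLpos]
    calc ‖∑ i ∈ Finset.range L,
          p i * Complex.exp (2 * Real.pi * Complex.I * (i : ℂ) * ((t : ℝ) : ℂ))‖ ^ 2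
        ≤ 2 * L + 2 * ∑ τ ∈ Finset.Icc 1 (L - 1),
            ‖acorr L p (τ : ℤ) + acorr L q (τ : ℤ)‖ := main t
      _ = (2 + 2 / L * ∑ τ ∈ Finset.Icc 1 (L - 1),
            ‖acorr L p (τ : ℤ) + acorr L q (τ : ℤ)‖) * L := by
          field_simp


end
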